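/- Let m ≥ n ≥ 1, let p ∈ [1,∞) be a real number, and let τ ≥ 1 be a real number. Let c_1, …, c_n ∈ ℝ^m be linearly independent vectors whose Gram–Schmidt orthogonalization satisfies the LLL reducedness conditions: |μ_{ij}| ≤ 1/2 for all 1 ≤ j < i ≤ n, and ‖c*_i‖₂² ≥ ½‖c*_{i−1}‖₂² for all 1 < i ≤ n. Let t′ ∈ ℝ^m be such that for every i the coefficient ⟨t′, c*_i⟩/⟨c*_i, c*_i⟩ lies in (−1/2, 1/2], and suppose there exists z₀ ∈ ℤ^n with ‖Σ_i (z₀)_i c_i − t′‖_p ≤ τ · ‖c_1‖_p (i.e., the ℓ_p distance of t′ to the lattice is at most τ‖c_1‖_p). If z ∈ ℤ^n is such that ‖Σ_i z_i c_i − t′‖_p ≤ ‖Σ_i y_i c_i − t′‖_p for every y ∈ ℤ^n, then max_i |z_i| < τ · m · 2^{3n/2}. -/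

import Mathlib

open scoped RealInnerProductSpace

/-- The Gram–Schmidt orthogonalization of a family of vectors indexed by `Fin n`
(instances given explicitly to aid elaboration). -/
noncomputable def gso {m n : ℕ} (c : Fin n → EuclideanSpace ℝ (Fin m)) :
    Fin n → EuclideanSpace ℝ (Fin m) :=
  @InnerProductSpace.gramSchmidt ℝ _ _ _ _ (Fin n) Fin.instLinearOrder (Fin.instLocallyFiniteOrderBot n)
    IsWellOrder.toIsWellFounded c

/-- The `ℓ_p` norm `(∑ i, |x i|^p)^{1/p}` of a vector `x ∈ ℝ^m`, for a real `p`. -/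
noncomputable def lpNorm' {m : ℕ} (p : ℝ) (x : EuclideanSpace ℝ (Fin m)) : ℝ :=
  (∑ i, |x i| ^ p) ^ (1 / p)


lemma aux_sum_rpow {k : ℕ} {s : ℝ} (hs : 1 ≤ s) (a : Fin k → ℝ) (ha : ∀ i, 0 ≤ a i) :
    ∑ i, a i ^ s ≤ (∑ i, a i) ^ s := by
  have hS0 : 0 ≤ ∑ i, a i := Finset.sum_nonneg fun i _ => ha i
  rcases eq_or_lt_of_le hS0 with h | h
  · have hall : ∀ i ∈ Finset.univ, a i = 0 :=
      (Finset.sum_eq_zero_iff_of_nonneg (fun i _ => ha i)).mp h.symm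
    have : ∀ i ∈ Finset.univ, a i ^ s = 0 := by
      intro i hi; rw [hall i hi, Real.zero_rpow (by linarith)]
    rw [Finset.sum_congr rfl this, ← h, Finset.sum_const, Real.zero_rpow (by linarith)]
    simp
  · calc ∑ i, a i ^ s ≤ ∑ i, a i * (∑ j, a j) ^ (s - 1) := by
          apply Finset.sum_le_sum
          intro i _
          rcases eq_or_lt_of_le (ha i) with h0 | h0
          · rw [← h0, Real.zero_rpow (by linarith), zero_mul]
          · have h1 : a i ^ s = a i * a i ^ (s - 1) := by
              rw [← Real.rpow_one_add' (ha i) (by linarith)]; ring_nf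
            rw [h1]
            apply mul_le_mul_of_nonneg_left _ (ha i)
            exact Real.rpow_le_rpow (ha i)
              (Finset.single_le_sum (fun j _ => ha j) (Finset.mem_univ i)) (by linarith)
      _ = (∑ j, a j) ^ s := by
          rw [← Finset.sum_mul, ← Real.rpow_one_add' (le_of_lt h) (by linarith)]
          ring_nf

lemma lp_nonneg {m : ℕ} (p : ℝ) (x : EuclideanSpace ℝ (Fin m)) : 0 ≤ lpNorm' p x :=
  Real.rpow_nonneg (Finset.sum_nonneg fun i _ => Real.rpow_nonneg (abs_nonneg _) p) _

lemma coord_le_lp {m : ℕ} {p : ℝ} (hp : 1 ≤ p) (x : EuclideanSpace ℝ (Fin m)) (i : Fin m) :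
    |x i| ≤ lpNorm' p x := by
  have hp0 : (0:ℝ) < p := lt_of_lt_of_le one_pos hp
  have h1 : |x i| ^ p ≤ ∑ j, |x j| ^ p :=
    Finset.single_le_sum (fun j _ => Real.rpow_nonneg (abs_nonneg _) p) (Finset.mem_univ i)
  calc |x i| = (|x i| ^ p) ^ (1/p) := by
        rw [← Real.rpow_mul (abs_nonneg _), mul_one_div, div_self hp0.ne', Real.rpow_one]
    _ ≤ (∑ j, |x j| ^ p) ^ (1/p) :=
        Real.rpow_le_rpow (Real.rpow_nonneg (abs_nonneg _) p) h1 (by positivity)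

lemma norm_eq_sqrt' {m : ℕ} (x : EuclideanSpace ℝ (Fin m)) :
    ‖x‖ = Real.sqrt (∑ i, |x i| ^ (2:ℝ)) := by
  rw [EuclideanSpace.norm_eq]
  congr 1
  apply Finset.sum_congr rfl
  intro i _
  rw [Real.norm_eq_abs, ← Real.rpow_natCast |x i| 2]
  norm_num

lemma l2_le_lp {m : ℕ} {p : ℝ} (hp : 1 ≤ p) (hp2 : p ≤ 2) (x : EuclideanSpace ℝ (Fin m)) :
    ‖x‖ ≤ lpNorm' p x := by
  have hp0 : (0:ℝ) < p := lt_of_lt_of_le one_pos hp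
  have hs : (1:ℝ) ≤ 2 / p := (le_div_iff₀ hp0).mpr (by linarith)
  have h1 : ∀ i : Fin m, |x i| ^ (2:ℝ) = (|x i| ^ p) ^ (2/p) := by
    intro i
    rw [← Real.rpow_mul (abs_nonneg _)]
    congr 1
    field_simp
  have h2 : ∑ i, |x i| ^ (2:ℝ) ≤ (∑ i, |x i| ^ p) ^ (2/p) := by
    calc ∑ i, |x i| ^ (2:ℝ) = ∑ i, (|x i| ^ p) ^ (2/p) := Finset.sum_congr rfl fun i _ => h1 i
      _ ≤ (∑ i, |x i| ^ p) ^ (2/p) :=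
        aux_sum_rpow hs _ (fun i => Real.rpow_nonneg (abs_nonneg _) p)
  rw [norm_eq_sqrt']
  have h3 : Real.sqrt (∑ i, |x i| ^ (2:ℝ)) ≤ Real.sqrt ((∑ i, |x i| ^ p) ^ (2/p)) :=
    Real.sqrt_le_sqrt h2
  refine h3.trans (le_of_eq ?_)
  rw [Real.sqrt_eq_rpow, ← Real.rpow_mul
    (Finset.sum_nonneg fun i _ => Real.rpow_nonneg (abs_nonneg _) p)]
  unfold lpNorm'
  congr 1
  field_simp

lemma lp_le_l2 {m : ℕ} {p : ℝ} (hp2 : 2 ≤ p) (x : EuclideanSpace ℝ (Fin m)) :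
    lpNorm' p x ≤ ‖x‖ := by
  have hp0 : (0:ℝ) < p := by linarith
  have hs : (1:ℝ) ≤ p / 2 := by linarith
  have h1 : ∀ i : Fin m, |x i| ^ p = (|x i| ^ (2:ℝ)) ^ (p/2) := by
    intro i
    rw [← Real.rpow_mul (abs_nonneg _)]
    congr 1
    field_simp
  have h2 : ∑ i, |x i| ^ p ≤ (∑ i, |x i| ^ (2:ℝ)) ^ (p/2) := by
    calc ∑ i, |x i| ^ p = ∑ i, (|x i| ^ (2:ℝ)) ^ (p/2) := Finset.sum_congr rfl fun i _ => h1 i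
      _ ≤ (∑ i, |x i| ^ (2:ℝ)) ^ (p/2) :=
        aux_sum_rpow hs _ (fun i => Real.rpow_nonneg (abs_nonneg _) 2)
  have hsum0 : (0:ℝ) ≤ ∑ i, |x i| ^ (2:ℝ) :=
    Finset.sum_nonneg fun i _ => Real.rpow_nonneg (abs_nonneg _) 2
  calc lpNorm' p x ≤ ((∑ i, |x i| ^ (2:ℝ)) ^ (p/2)) ^ (1/p) := by
        unfold lpNorm'
        exact Real.rpow_le_rpow
          (Finset.sum_nonneg fun i _ => Real.rpow_nonneg (abs_nonneg _) p) h2 (by positivity)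
    _ = ‖x‖ := by
        rw [norm_eq_sqrt', Real.sqrt_eq_rpow, ← Real.rpow_mul hsum0]
        congr 1
        field_simp

lemma l2_le_sqrtm_lp {m : ℕ} {p : ℝ} (hp : 1 ≤ p) (x : EuclideanSpace ℝ (Fin m)) :
    ‖x‖ ≤ Real.sqrt m * lpNorm' p x := by
  have hl := lp_nonneg p x
  have h1 : ∑ i, |x i| ^ (2:ℝ) ≤ (m:ℝ) * lpNorm' p x ^ (2:ℝ) := by
    calc ∑ i, |x i| ^ (2:ℝ) ≤ ∑ _i : Fin m, lpNorm' p x ^ (2:ℝ) := by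
          apply Finset.sum_le_sum
          intro i _
          exact Real.rpow_le_rpow (abs_nonneg _) (coord_le_lp hp x i) (by norm_num)
      _ = (m:ℝ) * lpNorm' p x ^ (2:ℝ) := by
          rw [Finset.sum_const]; simp [mul_comm]
  rw [norm_eq_sqrt']
  calc Real.sqrt (∑ i, |x i| ^ (2:ℝ)) ≤ Real.sqrt ((m:ℝ) * lpNorm' p x ^ (2:ℝ)) :=
        Real.sqrt_le_sqrt h1
    _ = Real.sqrt m * lpNorm' p x := by
        rw [Real.sqrt_mul (Nat.cast_nonneg m)]
        congr 1
        rw [Real.rpow_two, Real.sqrt_sq hl]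

lemma lp_le_m_l2 {m : ℕ} {p : ℝ} (hp : 1 ≤ p) (hm : 1 ≤ (m:ℝ)) (x : EuclideanSpace ℝ (Fin m)) :
    lpNorm' p x ≤ (m:ℝ) * ‖x‖ := by
  have hp0 : (0:ℝ) < p := lt_of_lt_of_le one_pos hp
  have hcoord : ∀ i : Fin m, |x i| ≤ ‖x‖ := by
    intro i
    rw [norm_eq_sqrt']
    have : |x i| ^ (2:ℝ) ≤ ∑ j, |x j| ^ (2:ℝ) :=
      Finset.single_le_sum (fun j _ => Real.rpow_nonneg (abs_nonneg _) 2) (Finset.mem_univ i)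
    calc |x i| = Real.sqrt (|x i| ^ (2:ℝ)) := by
          rw [Real.rpow_two, Real.sqrt_sq (abs_nonneg _)]
      _ ≤ _ := Real.sqrt_le_sqrt this
  have hx0 : (0:ℝ) ≤ ‖x‖ := norm_nonneg x
  have h1 : ∑ i, |x i| ^ p ≤ (m:ℝ) * ‖x‖ ^ p := by
    calc ∑ i, |x i| ^ p ≤ ∑ _i : Fin m, ‖x‖ ^ p := by
          apply Finset.sum_le_sum
          intro i _
          exact Real.rpow_le_rpow (abs_nonneg _) (hcoord i) (le_of_lt hp0)
      _ = (m:ℝ) * ‖x‖ ^ p := by rw [Finset.sum_const]; simp [mul_comm]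
  calc lpNorm' p x ≤ ((m:ℝ) * ‖x‖ ^ p) ^ (1/p) := by
        unfold lpNorm'
        exact Real.rpow_le_rpow
          (Finset.sum_nonneg fun i _ => Real.rpow_nonneg (abs_nonneg _) p) h1 (by positivity)
    _ = (m:ℝ) ^ (1/p) * ‖x‖ := by
        rw [Real.mul_rpow (by linarith) (Real.rpow_nonneg hx0 p), ← Real.rpow_mul hx0,
          mul_one_div, div_self hp0.ne', Real.rpow_one]
    _ ≤ (m:ℝ) * ‖x‖ := by
        apply mul_le_mul_of_nonneg_right _ hx0
        calc (m:ℝ) ^ (1/p) ≤ (m:ℝ) ^ (1:ℝ) :=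
              Real.rpow_le_rpow_of_exponent_le hm (by rw [div_le_one hp0]; exact hp)
          _ = m := Real.rpow_one _

lemma norm_bound {m : ℕ} {p : ℝ} (hp : 1 ≤ p) (hm : 1 ≤ (m:ℝ)) {τ : ℝ} (hτ : 0 ≤ τ)
    (x y : EuclideanSpace ℝ (Fin m)) (h : lpNorm' p x ≤ τ * lpNorm' p y) :
    ‖x‖ ≤ τ * (m:ℝ) * ‖y‖ := by
  rcases le_total p 2 with hle | hge
  · calc ‖x‖ ≤ lpNorm' p x := l2_le_lp hp hle x
      _ ≤ τ * lpNorm' p y := h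
      _ ≤ τ * ((m:ℝ) * ‖y‖) := mul_le_mul_of_nonneg_left (lp_le_m_l2 hp hm y) hτ
      _ = τ * (m:ℝ) * ‖y‖ := by ring
  · have hsm : Real.sqrt m ≤ (m:ℝ) := by
      nlinarith [Real.sq_sqrt (by linarith : (0:ℝ) ≤ (m:ℝ)), Real.sqrt_nonneg (m:ℝ)]
    have hy0 : (0:ℝ) ≤ τ * ‖y‖ := mul_nonneg hτ (norm_nonneg y)
    calc ‖x‖ ≤ Real.sqrt m * lpNorm' p x := l2_le_sqrtm_lp hp x
      _ ≤ Real.sqrt m * (τ * lpNorm' p y) :=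
          mul_le_mul_of_nonneg_left h (Real.sqrt_nonneg _)
      _ ≤ Real.sqrt m * (τ * ‖y‖) := by
          apply mul_le_mul_of_nonneg_left _ (Real.sqrt_nonneg _)
          exact mul_le_mul_of_nonneg_left (lp_le_l2 hge y) hτ
      _ ≤ (m:ℝ) * (τ * ‖y‖) := mul_le_mul_of_nonneg_right hsm hy0
      _ = τ * (m:ℝ) * ‖y‖ := by ring

instance auxWF (n : ℕ) : WellFoundedLT (Fin n) := IsWellOrder.toIsWellFounded

lemma gso_eq {m n : ℕ} (c : Fin n → EuclideanSpace ℝ (Fin m)) : gso c = InnerProductSpace.gramSchmidt ℝ c := rfl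

lemma gso_orthogonal {m n : ℕ} (c : Fin n → EuclideanSpace ℝ (Fin m)) {i j : Fin n}
    (h : i ≠ j) : ⟪gso c i, gso c j⟫ = 0 := by
  rw [gso_eq]; exact InnerProductSpace.gramSchmidt_orthogonal ℝ c h

lemma gso_zero {m n : ℕ} (hn : 1 ≤ n) (c : Fin n → EuclideanSpace ℝ (Fin m)) :
    gso c ⟨0, hn⟩ = c ⟨0, hn⟩ := by
  rw [gso_eq, InnerProductSpace.gramSchmidt_def]
  have h : Finset.Iio (⟨0, hn⟩ : Fin n) = ∅ := by
    ext i; simp [Fin.lt_def]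
  rw [h, Finset.sum_empty, sub_zero]

lemma inner_c_gso_of_lt {m n : ℕ} (c : Fin n → EuclideanSpace ℝ (Fin m)) {i j : Fin n}
    (h : i < j) : ⟪c i, gso c j⟫ = 0 := by
  rw [gso_eq]
  conv_lhs => rw [InnerProductSpace.gramSchmidt_def'' ℝ c i]
  rw [inner_add_left, InnerProductSpace.gramSchmidt_orthogonal ℝ c h.ne, sum_inner, zero_add]
  apply Finset.sum_eq_zero
  intro k hk
  rw [real_inner_smul_left,
    InnerProductSpace.gramSchmidt_orthogonal ℝ c (ne_of_lt (lt_trans (Finset.mem_Iio.mp hk) h)), mul_zero]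

lemma inner_c_gso_self {m n : ℕ} (c : Fin n → EuclideanSpace ℝ (Fin m)) (j : Fin n) :
    ⟪c j, gso c j⟫ = ‖gso c j‖ ^ 2 := by
  rw [gso_eq]
  conv_lhs => rw [InnerProductSpace.gramSchmidt_def'' ℝ c j]
  rw [inner_add_left, sum_inner, real_inner_self_eq_norm_sq]
  have h0 : ∀ k ∈ Finset.Iio j,
      (⟪(⟪InnerProductSpace.gramSchmidt ℝ c k, c j⟫ / (RCLike.ofReal ‖InnerProductSpace.gramSchmidt ℝ c k‖ : ℝ) ^ 2) •
        InnerProductSpace.gramSchmidt ℝ c k, InnerProductSpace.gramSchmidt ℝ c j⟫ : ℝ) = 0 := by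
    intro k hk
    rw [real_inner_smul_left,
      InnerProductSpace.gramSchmidt_orthogonal ℝ c (ne_of_lt (Finset.mem_Iio.mp hk)), mul_zero]
  rw [Finset.sum_eq_zero h0, add_zero]

lemma gso_ne_zero {m n : ℕ} {c : Fin n → EuclideanSpace ℝ (Fin m)}
    (hc : LinearIndependent ℝ c) (j : Fin n) : gso c j ≠ 0 := by
  rw [gso_eq]; exact InnerProductSpace.gramSchmidt_ne_zero j hc

/-- Let `p ∈ [1,∞)`, `τ ≥ 1`, and let `c_1, …, c_n ∈ ℝ^m` be linearly independent
with LLL-reduced Gram–Schmidt data. Let `t'` have all Gram–Schmidt coefficients in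
`(−1/2, 1/2]`, and suppose some lattice vector is within `ℓ_p` distance `τ·‖c_1‖_p` of `t'`.
Then the coefficient vector `z ∈ ℤⁿ` of any `ℓ_p`-closest lattice point to `t'` satisfies
`max_i |z_i| < τ · m · 2^{3n/2}`. -/
theorem stmt_7 (m n : ℕ) (hn : 1 ≤ n) (hmn : n ≤ m)
    (p : ℝ) (hp : 1 ≤ p) (τ : ℝ) (hτ : 1 ≤ τ)
    (c : Fin n → EuclideanSpace ℝ (Fin m)) (hc : LinearIndependent ℝ c)
    (hμ : ∀ i j : Fin n, j < i →
      abs (⟪c i, gso c j⟫ / ⟪gso c j, gso c j⟫) ≤ 1 / 2)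
    (hred : ∀ i j : Fin n, (j : ℕ) + 1 = (i : ℕ) →
      ‖gso c i‖ ^ 2 ≥ (1 / 2) * ‖gso c j‖ ^ 2)
    (t' : EuclideanSpace ℝ (Fin m))
    (ht' : ∀ i : Fin n,
      ⟪t', gso c i⟫ / ⟪gso c i, gso c i⟫ ∈ Set.Ioc (-(1/2) : ℝ) (1/2))
    (hpromise : ∃ z₀ : Fin n → ℤ,
      lpNorm' p ((∑ i, ((z₀ i : ℝ)) • c i) - t') ≤ τ * lpNorm' p (c ⟨0, hn⟩))
    (z : Fin n → ℤ)
    (hz : ∀ y : Fin n → ℤ,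
      lpNorm' p ((∑ i, (z i : ℝ) • c i) - t') ≤ lpNorm' p ((∑ i, (y i : ℝ) • c i) - t')) :
    ∀ i, (|z i| : ℝ) < τ * m * 2 ^ ((3 * (n : ℝ)) / 2) := by
  have hm1 : (1:ℝ) ≤ m := by exact_mod_cast le_trans hn hmn
  obtain ⟨z₀, hz₀⟩ := hpromise
  set c0 : EuclideanSpace ℝ (Fin m) := c ⟨0, hn⟩ with hc0
  set x : EuclideanSpace ℝ (Fin m) := (∑ i, (z i : ℝ) • c i) - t' with hxdef
  have hxlp : lpNorm' p x ≤ τ * lpNorm' p c0 := le_trans (hz z₀) hz₀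
  have hR : ‖x‖ ≤ τ * m * ‖c0‖ := norm_bound hp hm1 (by linarith) x c0 hxlp
  have hepos : ∀ j : Fin n, (0:ℝ) < ‖gso c j‖ :=
    fun j => norm_pos_iff.mpr (gso_ne_zero hc j)
  set Q : ℝ := Real.sqrt (2 ^ (n-1)) with hQ
  have hQ1 : (1:ℝ) ≤ Q := by
    rw [hQ, show (1:ℝ) = Real.sqrt 1 from Real.sqrt_one.symm]
    exact Real.sqrt_le_sqrt (one_le_pow₀ (by norm_num))
  -- the chain inequality for Gram-Schmidt norms
  have hchain0 : ∀ k, ∀ hk : k < n,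
      (1/2:ℝ)^k * ‖gso c ⟨0,hn⟩‖^2 ≤ ‖gso c ⟨k,hk⟩‖^2 := by
    intro k
    induction k with
    | zero => intro hk; rw [pow_zero, one_mul]
    | succ k ih =>
      intro hk
      have hk' : k < n := by omega
      have h1 := ih hk'
      have h2 := hred ⟨k+1, hk⟩ ⟨k, hk'⟩ rfl
      calc (1/2:ℝ)^(k+1) * ‖gso c ⟨0,hn⟩‖^2
          = (1/2) * ((1/2)^k * ‖gso c ⟨0,hn⟩‖^2) := by ring
        _ ≤ (1/2) * ‖gso c ⟨k,hk'⟩‖^2 := by linarith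
        _ ≤ ‖gso c ⟨k+1,hk⟩‖^2 := h2
  have hchain : ∀ j : Fin n, ‖c0‖ ≤ Q * ‖gso c j‖ := by
    intro j
    have h2 := hchain0 j.val j.isLt
    rw [Fin.eta] at h2
    have h3 : (1/2:ℝ)^(n-1) ≤ (1/2:ℝ)^(j:ℕ) :=
      pow_le_pow_of_le_one (by norm_num) (by norm_num) (by omega)
    have h4 : (0:ℝ) ≤ ‖gso c ⟨0,hn⟩‖^2 := sq_nonneg _
    have h1 : (1/2:ℝ)^(n-1) * ‖gso c ⟨0,hn⟩‖^2 ≤ ‖gso c j‖^2 := by nlinarith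
    have he0 : ‖gso c ⟨0,hn⟩‖ = ‖c0‖ := by rw [gso_zero hn c]
    have hmul : (1/2:ℝ)^(n-1) * 2^(n-1) = 1 := by
      rw [← mul_pow]; norm_num
    have hpow2 : (0:ℝ) < 2^(n-1) := by positivity
    have h5 : ‖c0‖^2 ≤ 2^(n-1) * ‖gso c j‖^2 := by
      rw [← he0]; nlinarith
    calc ‖c0‖ = Real.sqrt (‖c0‖^2) := (Real.sqrt_sq (norm_nonneg _)).symm
      _ ≤ Real.sqrt (2^(n-1) * ‖gso c j‖^2) := Real.sqrt_le_sqrt h5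
      _ = Q * ‖gso c j‖ := by
          rw [Real.sqrt_mul (by positivity), Real.sqrt_sq (norm_nonneg _)]
  set B : ℝ := τ * m * Q + 1/2 with hB
  have hτm1 : (1:ℝ) ≤ τ * m := by
    have := mul_le_mul hτ hm1 zero_le_one (by linarith : (0:ℝ) ≤ τ)
    linarith
  have hτmQ1 : (1:ℝ) ≤ τ * m * Q := by
    have := mul_le_mul hτm1 hQ1 zero_le_one (by linarith : (0:ℝ) ≤ τ * m)
    linarith
  have hB0 : (0:ℝ) ≤ B := by rw [hB]; linarith
  -- the key per-coordinate estimate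
  have hkey : ∀ j : Fin n, |(z j : ℝ)| ≤ B + (1/2) * ∑ i ∈ Finset.Ioi j, |(z i : ℝ)| := by
    intro j
    set E : ℝ := ‖gso c j‖ with hEdef
    have hE : (0:ℝ) < E := hepos j
    have hE2 : (0:ℝ) < E^2 := by positivity
    have hEE : ⟪gso c j, gso c j⟫ = E^2 := real_inner_self_eq_norm_sq _
    have hbb : ∀ w : EuclideanSpace ℝ (Fin m),
        |⟪w, gso c j⟫ / ⟪gso c j, gso c j⟫| ≤ 1/2 → |⟪w, gso c j⟫| ≤ 1/2 * E^2 := by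
      intro w hw
      rw [abs_div, hEE, abs_of_pos hE2] at hw
      calc |⟪w, gso c j⟫| = |⟪w, gso c j⟫| / E^2 * E^2 := by field_simp
        _ ≤ 1/2 * E^2 := mul_le_mul_of_nonneg_right hw (le_of_lt hE2)
    have hsum : ⟪(∑ i, (z i:ℝ) • c i : EuclideanSpace ℝ (Fin m)), gso c j⟫
        = ∑ i, (z i:ℝ) * ⟪c i, gso c j⟫ := by
      rw [sum_inner]
      exact Finset.sum_congr rfl fun i _ => real_inner_smul_left _ _ _
    have hsplit : ∑ i, (z i:ℝ) * ⟪c i, gso c j⟫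
        = (z j:ℝ) * E^2 + ∑ i ∈ Finset.Ioi j, (z i:ℝ) * ⟪c i, gso c j⟫ := by
      rw [← Finset.sum_subset (Finset.subset_univ (insert j (Finset.Ioi j)))
        (fun i _ hi => by
          have hij : i < j := by
            simp only [Finset.mem_insert, Finset.mem_Ioi, not_or, not_lt] at hi
            exact lt_of_le_of_ne hi.2 hi.1
          rw [inner_c_gso_of_lt c hij, mul_zero])]
      rw [Finset.sum_insert (by simp), inner_c_gso_self c j]
    have hx_inner : ⟪x, gso c j⟫
        = (z j:ℝ) * E^2 + (∑ i ∈ Finset.Ioi j, (z i:ℝ) * ⟪c i, gso c j⟫)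
          - ⟪t', gso c j⟫ := by
      rw [hxdef, inner_sub_left, hsum, hsplit]
    have hb1 : |⟪x, gso c j⟫| ≤ ‖x‖ * E := abs_real_inner_le_norm _ _
    have hb2 : |⟪t', gso c j⟫| ≤ 1/2 * E^2 := by
      have h := ht' j
      exact hbb t' (abs_le.mpr ⟨le_of_lt h.1, h.2⟩)
    have hb3 : ∀ i ∈ Finset.Ioi j, |(z i:ℝ) * ⟪c i, gso c j⟫|
        ≤ |(z i:ℝ)| * (1/2 * E^2) := by
      intro i hi
      rw [abs_mul]
      exact mul_le_mul_of_nonneg_left (hbb (c i) (hμ i j (Finset.mem_Ioi.mp hi)))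
        (abs_nonneg _)
    set S : ℝ := ∑ i ∈ Finset.Ioi j, |(z i:ℝ)| with hSdef
    have hS0 : (0:ℝ) ≤ S := Finset.sum_nonneg fun i _ => abs_nonneg _
    have hSig : |∑ i ∈ Finset.Ioi j, (z i:ℝ) * ⟪c i, gso c j⟫| ≤ S * (1/2 * E^2) := by
      calc |∑ i ∈ Finset.Ioi j, (z i:ℝ) * ⟪c i, gso c j⟫|
          ≤ ∑ i ∈ Finset.Ioi j, |(z i:ℝ) * ⟪c i, gso c j⟫| :=
            Finset.abs_sum_le_sum_abs _ _
        _ ≤ ∑ i ∈ Finset.Ioi j, |(z i:ℝ)| * (1/2 * E^2) := Finset.sum_le_sum hb3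
        _ = S * (1/2 * E^2) := by rw [hSdef, Finset.sum_mul]
    have hmain : |(z j:ℝ)| * E^2 ≤ ‖x‖ * E + 1/2 * E^2 + S * (1/2 * E^2) := by
      have h4 : (z j:ℝ) * E^2 = ⟪x, gso c j⟫ + ⟪t', gso c j⟫
          - ∑ i ∈ Finset.Ioi j, (z i:ℝ) * ⟪c i, gso c j⟫ := by
        rw [hx_inner]; ring
      calc |(z j:ℝ)| * E^2 = |(z j:ℝ) * E^2| := by
            rw [abs_mul, abs_of_pos hE2]
        _ = |⟪x, gso c j⟫ + ⟪t', gso c j⟫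
            - ∑ i ∈ Finset.Ioi j, (z i:ℝ) * ⟪c i, gso c j⟫| := by rw [h4]
        _ ≤ |⟪x, gso c j⟫| + |⟪t', gso c j⟫|
            + |∑ i ∈ Finset.Ioi j, (z i:ℝ) * ⟪c i, gso c j⟫| := by
            have := abs_add_le (⟪x, gso c j⟫) (⟪t', gso c j⟫)
            have := abs_sub (⟪x, gso c j⟫ + ⟪t', gso c j⟫)
              (∑ i ∈ Finset.Ioi j, (z i:ℝ) * ⟪c i, gso c j⟫)
            linarith
        _ ≤ ‖x‖ * E + 1/2 * E^2 + S * (1/2 * E^2) := by linarith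
    have h5a : ‖x‖ ≤ τ * m * (Q * E) :=
      le_trans hR (mul_le_mul_of_nonneg_left (hchain j) (by linarith))
    have h5 : ‖x‖ * E ≤ τ * m * Q * E^2 := by
      calc ‖x‖ * E ≤ (τ * m * (Q * E)) * E := mul_le_mul_of_nonneg_right h5a hE.le
        _ = τ * m * Q * E^2 := by ring
    have h6 : |(z j:ℝ)| * E^2 ≤ (B + 1/2 * S) * E^2 := by
      have heq : (B + 1/2 * S) * E^2
          = τ * m * Q * E^2 + 1/2 * E^2 + S * (1/2 * E^2) := by rw [hB]; ring
      linarith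
    exact le_of_mul_le_mul_right h6 hE2
  -- tail sums
  set F : ℕ → ℝ := fun k => ∑ i ∈ Finset.univ.filter (fun i : Fin n => k ≤ (i:ℕ)),
    |(z i:ℝ)| with hFdef
  have hFn : ∀ k, n ≤ k → F k = 0 := by
    intro k hk
    have hemp : Finset.univ.filter (fun i : Fin n => k ≤ (i:ℕ)) = ∅ :=
      Finset.filter_false_of_mem (fun i _ => by have := i.isLt; omega)
    simp only [hFdef, hemp, Finset.sum_empty]
  have hsplitF : ∀ k, ∀ hk : k < n, F k = |(z ⟨k,hk⟩:ℝ)| + F (k+1) := by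
    intro k hk
    have hins : Finset.univ.filter (fun i : Fin n => k ≤ (i:ℕ))
        = insert ⟨k,hk⟩ (Finset.univ.filter (fun i : Fin n => k+1 ≤ (i:ℕ))) := by
      ext i
      simp only [Finset.mem_filter, Finset.mem_univ, true_and, Finset.mem_insert,
        Fin.ext_iff]
      omega
    simp only [hFdef]
    rw [hins, Finset.sum_insert (by simp)]
  have hIoiF : ∀ j : Fin n, ∑ i ∈ Finset.Ioi j, |(z i:ℝ)| = F ((j:ℕ)+1) := by
    intro j
    simp only [hFdef]
    apply Finset.sum_congr _ (fun _ _ => rfl)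
    ext i
    simp only [Finset.mem_Ioi, Finset.mem_filter, Finset.mem_univ, true_and, Fin.lt_def]
    omega
  have hF : ∀ d k, k + d = n → F k ≤ 2 * B * ((3/2:ℝ)^d - 1) := by
    intro d
    induction d with
    | zero =>
      intro k hk
      rw [hFn k (by omega)]
      norm_num
    | succ d ih =>
      intro k hk
      have hkn : k < n := by omega
      have h1 := hsplitF k hkn
      have h2 := hkey ⟨k, hkn⟩
      rw [hIoiF ⟨k, hkn⟩] at h2
      have h3 := ih (k+1) (by omega)
      have hps : (3/2:ℝ)^(d+1) = (3/2:ℝ)^d * (3/2) := pow_succ _ _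
      rw [h1]
      rw [hps]
      linarith
  -- conclude
  intro i₀
  have h7 := hF (n - 1 - (i₀:ℕ)) ((i₀:ℕ)+1) (by omega)
  have h8 := hkey i₀
  rw [hIoiF i₀] at h8
  set d := n - 1 - (i₀:ℕ) with hd
  have h9 : |(z i₀:ℝ)| ≤ B * (3/2:ℝ)^d := by linarith [h7, h8]
  have h10 : (3/2:ℝ)^d ≤ (3/2:ℝ)^(n-1) :=
    pow_le_pow_right₀ (by norm_num) (by omega)
  have h11 : |(z i₀:ℝ)| ≤ B * (3/2:ℝ)^(n-1) :=
    le_trans h9 (mul_le_mul_of_nonneg_left h10 hB0)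
  -- final numeric estimate
  have ha : ((n-1:ℕ):ℝ) = (n:ℝ) - 1 := by
    rw [Nat.cast_sub hn, Nat.cast_one]
  have hQrpow : Q = (2:ℝ) ^ (((n:ℝ)-1)/2) := by
    rw [hQ, Real.sqrt_eq_rpow, ← Real.rpow_natCast (2:ℝ) (n-1),
      ← Real.rpow_mul (by norm_num), ha]
    congr 1
    ring
  have hpow2r : (2:ℝ)^(n-1) = (2:ℝ) ^ ((n:ℝ)-1) := by
    rw [← Real.rpow_natCast (2:ℝ) (n-1), ha]
  set r : ℝ := (2:ℝ) ^ ((3*((n:ℝ)-1))/2) with hr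
  have hq2 : Q * (2:ℝ)^(n-1) = r := by
    rw [hQrpow, hpow2r, ← Real.rpow_add (by norm_num), hr]
    congr 1
    ring
  have hrhs : (2:ℝ) ^ ((3*(n:ℝ))/2) = r * (2:ℝ) ^ ((3:ℝ)/2) := by
    rw [hr, ← Real.rpow_add (by norm_num)]
    congr 1
    ring
  have h32 : (3/2:ℝ) < (2:ℝ) ^ ((3:ℝ)/2) := by
    have : (2:ℝ) = (2:ℝ) ^ (1:ℝ) := (Real.rpow_one 2).symm
    calc (3/2:ℝ) < 2 := by norm_num
      _ = (2:ℝ) ^ (1:ℝ) := (Real.rpow_one 2).symm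
      _ ≤ (2:ℝ) ^ ((3:ℝ)/2) :=
          Real.rpow_le_rpow_of_exponent_le (by norm_num) (by norm_num)
  have hr0 : (0:ℝ) < r := Real.rpow_pos_of_pos (by norm_num) _
  have hA1 : B ≤ (3/2) * (τ * m * Q) := by rw [hB]; linarith
  have hp32 : (0:ℝ) ≤ (3/2:ℝ)^(n-1) := by positivity
  have h12 : B * (3/2:ℝ)^(n-1) ≤ (3/2) * (τ * m) * (Q * (2:ℝ)^(n-1)) := by
    calc B * (3/2:ℝ)^(n-1) ≤ (3/2) * (τ * m * Q) * (3/2:ℝ)^(n-1) :=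
          mul_le_mul_of_nonneg_right hA1 hp32
      _ ≤ (3/2) * (τ * m * Q) * (2:ℝ)^(n-1) := by
          apply mul_le_mul_of_nonneg_left
            (pow_le_pow_left₀ (by norm_num) (by norm_num) _)
          linarith
      _ = (3/2) * (τ * m) * (Q * (2:ℝ)^(n-1)) := by ring
  have hfinal : B * (3/2:ℝ)^(n-1) < τ * m * (2:ℝ) ^ ((3*(n:ℝ))/2) := by
    calc B * (3/2:ℝ)^(n-1) ≤ (3/2) * (τ * m) * (Q * (2:ℝ)^(n-1)) := h12
      _ = (3/2) * ((τ * m) * r) := by rw [hq2]; ring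
      _ < (2:ℝ) ^ ((3:ℝ)/2) * ((τ * m) * r) := by
          apply mul_lt_mul_of_pos_right h32
          exact mul_pos (by linarith) hr0
      _ = τ * m * (2:ℝ) ^ ((3*(n:ℝ))/2) := by rw [hrhs]; ring
  exact lt_of_le_of_lt h11 hfinal
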